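/- Let G be an antisymmetric real n×n matrix (payoff matrix of a symmetric zero-sum game), let σ be a Nash equilibrium mixed strategy (i.e., for all mixed strategies τ, τᵀGσ ≤ 0), and let σ' be another mixed strategy whose support does not contain the support of σ, such that every pure strategy π in the support of σ' satisfies 1_πᵀGσ' = 0. Then there exists a pure strategy π in the support of σ but not in the support of σ' with 1_πᵀGσ' ≥ 0. -/
import Mathlib


open Matrix Finset

/-- A mixed strategy: nonnegative entries summing to 1. -/
def IsMixed {n : ℕ} (σ : Fin n → ℝ) : Prop :=
  (∀ i, 0 ≤ σ i) ∧ ∑ i, σ i = 1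

theorem psro_support_expansion {n : ℕ} (G : Matrix (Fin n) (Fin n) ℝ)
    (hG : Gᵀ = -G)
    (σ σ' : Fin n → ℝ) (hσ : IsMixed σ) (hσ' : IsMixed σ')
    (hNash : ∀ τ : Fin n → ℝ, IsMixed τ → τ ⬝ᵥ (G *ᵥ σ) ≤ 0)
    (hsupp : ¬ ({i | σ i > 0} ⊆ {i | σ' i > 0}))
    (hmeta : ∀ i, σ' i > 0 → (G *ᵥ σ') i = 0) :
    ∃ i, σ i > 0 ∧ ¬ σ' i > 0 ∧ 0 ≤ (G *ᵥ σ') i := by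
  by_contra h
  push_neg at h
  -- witness i₀ with σ i₀ > 0 but ¬ σ' i₀ > 0
  rw [Set.not_subset] at hsupp
  obtain ⟨i₀, hi₀, hi₀'⟩ := hsupp
  simp only [Set.mem_setOf_eq] at hi₀ hi₀'
  -- σ ⬝ᵥ (G *ᵥ σ') = -(σ' ⬝ᵥ (G *ᵥ σ)) ≥ 0
  have key : σ ⬝ᵥ (G *ᵥ σ') = -(σ' ⬝ᵥ (G *ᵥ σ)) := by
    rw [Matrix.dotProduct_mulVec, ← Matrix.mulVec_transpose, hG, Matrix.neg_mulVec,
      neg_dotProduct, dotProduct_comm]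
  have hge : 0 ≤ σ ⬝ᵥ (G *ᵥ σ') := by
    rw [key]
    linarith [hNash σ' hσ']
  -- but each term σ i * (Gσ')_i ≤ 0, with strict < at i₀
  have hlt : σ ⬝ᵥ (G *ᵥ σ') < 0 := by
    unfold dotProduct
    have hle : ∀ i ∈ Finset.univ, σ i * (G *ᵥ σ') i ≤ 0 := by
      intro i _
      rcases lt_or_eq_of_le (hσ.1 i) with hpos | hz
      · by_cases hs : σ' i > 0
        · rw [hmeta i hs]; simp
        · have := h i hpos (not_lt.mp hs)
          exact le_of_lt (mul_neg_of_pos_of_neg hpos this)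
      · rw [← hz]; simp
    have hstrict : σ i₀ * (G *ᵥ σ') i₀ < 0 :=
      mul_neg_of_pos_of_neg hi₀ (h i₀ hi₀ (not_lt.mp hi₀'))
    calc ∑ i, σ i * (G *ᵥ σ') i
        ≤ ∑ i ∈ Finset.univ \ {i₀}, σ i * (G *ᵥ σ') i + σ i₀ * (G *ᵥ σ') i₀ := by
          rw [Finset.sum_eq_sum_sdiff_singleton_add (Finset.mem_univ i₀)]
      _ < 0 + 0 := by
          apply add_lt_add_of_le_of_lt _ hstrict
          exact Finset.sum_nonpos fun i hi => hle i (Finset.mem_univ i)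
      _ = 0 := by ring
  linarith
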